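/- Let d, nᵗ, n ∈ ℝ³ with d ≠ 0, let R₀ be a 3×3 rotation matrix, set x₀ := R₀ n and h* := x₀ − (((x₀ + nᵗ)·d)/‖d‖²) d. Then for every 3×3 rotation matrix R, [(R n + nᵗ)·d]² ≤ ‖d‖² ‖R n − h*‖²; that is, the surrogate f̄(R | R₀) := ‖d‖² ‖R n − h*‖² bounds f(R) := [(R n + nᵗ)·d]² from above on SO(3). -/

import Mathlib

open scoped RealInnerProductSpace
open Matrix

noncomputable section

/-- A 3×3 real matrix is a rotation if `RᵀR = I` and `det R = 1`. -/
def IsRotation (R : Matrix (Fin 3) (Fin 3) ℝ) : Prop := Rᵀ * R = 1 ∧ R.det = 1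

/-- First surrogate condition (Eq. (15), Appendix A-B): with `x₀ = R₀ n` and
`h* = x₀ − (((x₀ + nᵗ)·d)/‖d‖²) d`, the surrogate `f̄(R | R₀) = ‖d‖² ‖R n − h*‖²`
bounds `f(R) = [(R n + nᵗ)·d]²` from above on SO(3). -/
theorem surrogate_upper_bound
    (d nt n : EuclideanSpace ℝ (Fin 3)) (hd : d ≠ 0)
    (R₀ : Matrix (Fin 3) (Fin 3) ℝ) (hR₀ : IsRotation R₀)
    (x₀ hstar : EuclideanSpace ℝ (Fin 3))
    (hx₀ : x₀ = Matrix.toEuclideanLin R₀ n)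
    (hhstar : hstar = x₀ - (⟪x₀ + nt, d⟫ / ‖d‖ ^ 2) • d) :
    ∀ R : Matrix (Fin 3) (Fin 3) ℝ, IsRotation R →
      ⟪Matrix.toEuclideanLin R n + nt, d⟫ ^ 2
        ≤ ‖d‖ ^ 2 * ‖Matrix.toEuclideanLin R n - hstar‖ ^ 2 := by
  intro R hR
  set u := Matrix.toEuclideanLin R n with hu
  have hdn : ‖d‖ ^ 2 ≠ 0 := pow_ne_zero _ (norm_ne_zero_iff.mpr hd)
  have key : ⟪u + nt, d⟫ = ⟪u - hstar, d⟫ := by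
    subst hhstar
    rw [inner_sub_left, inner_sub_left, inner_add_left, inner_smul_left,
      real_inner_self_eq_norm_sq]
    field_simp
    simp only [conj_trivial, inner_add_left, inv_pow]
    rw [mul_div_cancel₀ _ hdn]
    ring
  rw [key]
  have h1 : |⟪u - hstar, d⟫| ≤ ‖u - hstar‖ * ‖d‖ := abs_real_inner_le_norm _ _
  calc ⟪u - hstar, d⟫ ^ 2 = |⟪u - hstar, d⟫| ^ 2 := (sq_abs _).symm
    _ ≤ (‖u - hstar‖ * ‖d‖) ^ 2 := by
        apply pow_le_pow_left₀ (abs_nonneg _) h1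
    _ = ‖d‖ ^ 2 * ‖u - hstar‖ ^ 2 := by ring
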